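/- For every natural number n and every real (or rational) t, ∑_{k=0}^{n} 2^{n-k} · s(n,k) · t^k = ∑_{k=0}^{n} b(n,k) · (t)_k, where (t)_k = t(t-1)···(t-k+1) is the falling factorial, s(n,k) are the signed Stirling numbers of the first kind, and b(n,k) are the Bessel numbers of the first kind. -/

import Mathlib

/-- The signed Stirling numbers of the first kind `s(n,k)`, defined as the
coefficients in the falling factorial expansion
`x(x-1)⋯(x-n+1) = ∑_{k=0}^{n} s(n,k) xᵏ`. -/
noncomputable def stirlingFirst (n k : ℕ) : ℤ :=
  (descPochhammer ℤ n).coeff k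

/-- The Bessel numbers of the first kind:
`b(n,k) = (-1)^{n-k} (2n-k-1)! / (2^{n-k} (k-1)! (n-k)!)` for `1 ≤ k ≤ n`,
`b(0,0) = 1`, `b(n,0) = 0` for `n ≥ 1`, and `b(n,k) = 0` for `n < k`. -/
def besselFirst (n k : ℕ) : ℚ :=
  if k = 0 then (if n = 0 then 1 else 0)
  else if k ≤ n then
    (-1) ^ (n - k) * (Nat.factorial (2 * n - k - 1)) /
      (2 ^ (n - k) * (Nat.factorial (k - 1)) * (Nat.factorial (n - k)))
  else 0

/-- The falling factorial `(t)_k = t(t-1)⋯(t-k+1)`, with `(t)_0 = 1`. -/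
def fallingFactorial (t : ℚ) (k : ℕ) : ℚ :=
  ∏ j ∈ Finset.range k, (t - j)

lemma ff_succ (t : ℚ) (k : ℕ) :
    fallingFactorial t (k + 1) = fallingFactorial t k * (t - k) := by
  simp [fallingFactorial, Finset.prod_range_succ]

lemma desc_eval (n : ℕ) (x : ℚ) :
    (descPochhammer ℚ n).eval x = ∏ j ∈ Finset.range n, (x - j) := by
  induction n with
  | zero => simp
  | succ n ih => rw [descPochhammer_succ_eval, ih, Finset.prod_range_succ]

lemma bessel_of_le (n k : ℕ) (h1 : k ≠ 0) (h2 : k ≤ n) :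
    besselFirst n k = (-1) ^ (n - k) * (Nat.factorial (2 * n - k - 1)) /
      (2 ^ (n - k) * (Nat.factorial (k - 1)) * (Nat.factorial (n - k))) := by
  simp [besselFirst, h1, h2]

lemma bessel_key (j a : ℕ) :
    ((-1:ℚ))^(a+1) * (Nat.factorial (j+2*a+3)) / (2^(a+1) * (Nat.factorial (j+1)) * (Nat.factorial (a+1)))
    = (-1)^(a+1) * (Nat.factorial (j+2*a+2)) / (2^(a+1) * (Nat.factorial j) * (Nat.factorial (a+1)))
      + (((j:ℚ)+2) - 2*((j:ℚ)+2+a)) *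
        ((-1)^a * (Nat.factorial (j+2*a+1)) / (2^a * (Nat.factorial (j+1)) * (Nat.factorial a))) := by
  have h1 : Nat.factorial (j+2*a+3) = (j+2*a+3) * Nat.factorial (j+2*a+2) := rfl
  have h2 : Nat.factorial (j+2*a+2) = (j+2*a+2) * Nat.factorial (j+2*a+1) := rfl
  have h3 : Nat.factorial (j+1) = (j+1) * Nat.factorial j := rfl
  have h4 : Nat.factorial (a+1) = (a+1) * Nat.factorial a := rfl
  have hj : (Nat.factorial j : ℚ) ≠ 0 := Nat.cast_ne_zero.mpr (Nat.factorial_ne_zero j)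
  have ha : (Nat.factorial a : ℚ) ≠ 0 := Nat.cast_ne_zero.mpr (Nat.factorial_ne_zero a)
  have h2p : (2:ℚ)^a ≠ 0 := pow_ne_zero _ two_ne_zero
  rw [h1, h2, h3, h4]
  push_cast
  field_simp
  ring

lemma bessel_rec (n k : ℕ) :
    besselFirst (n+1) k =
      (if k = 0 then 0 else besselFirst n (k-1)) + ((k:ℚ) - 2*n) * besselFirst n k := by
  rcases Nat.eq_zero_or_pos k with rfl | hk
  · rcases Nat.eq_zero_or_pos n with rfl | hn
    · simp [besselFirst]
    · simp [besselFirst, hn.ne']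
  rcases lt_trichotomy k (n+1) with hlt | heq | hgt
  · -- 1 ≤ k ≤ n
    have hkn : k ≤ n := by omega
    rcases Nat.lt_or_ge k 2 with hk1 | hk2
    · -- k = 1, n ≥ 1
      have hk' : k = 1 := by omega
      subst hk'
      obtain ⟨m, rfl⟩ : ∃ m, n = m + 1 := ⟨n - 1, by omega⟩
      rw [bessel_of_le _ _ one_ne_zero (by omega), bessel_of_le _ _ one_ne_zero (by omega),
        if_neg one_ne_zero]
      have hb0 : besselFirst (m+1) 0 = 0 := by simp [besselFirst]
      rw [hb0]
      rw [show m+1+1-1 = m+1 from by omega, show 2*(m+1+1)-1-1 = 2*m+2 from by omega,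
        show (1:ℕ)-1 = 0 from rfl, show m+1-1 = m from by omega,
        show 2*(m+1)-1-1 = 2*m from by omega]
      have h1 : Nat.factorial (2*m+2) = (2*m+2) * Nat.factorial (2*m+1) := rfl
      have h2 : Nat.factorial (2*m+1) = (2*m+1) * Nat.factorial (2*m) := rfl
      have h3 : Nat.factorial (m+1) = (m+1) * Nat.factorial m := rfl
      rw [h1, h2, h3]
      have hm : (Nat.factorial m : ℚ) ≠ 0 := Nat.cast_ne_zero.mpr (Nat.factorial_ne_zero m)
      have h2m : (Nat.factorial (2*m) : ℚ) ≠ 0 := Nat.cast_ne_zero.mpr (Nat.factorial_ne_zero _)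
      have h2p : (2:ℚ)^m ≠ 0 := pow_ne_zero _ two_ne_zero
      push_cast
      field_simp
      ring
    · -- 2 ≤ k ≤ n
      obtain ⟨j, rfl⟩ : ∃ j, k = j + 2 := ⟨k - 2, by omega⟩
      obtain ⟨a, rfl⟩ : ∃ a, n = j + 2 + a := ⟨n - (j+2), by omega⟩
      rw [bessel_of_le _ _ (by omega) (by omega), bessel_of_le _ _ (by omega) (by omega),
        bessel_of_le _ _ (by omega) (by omega), if_neg (by omega : ¬ j+2 = 0)]
      rw [show j+2+a+1-(j+2) = a+1 from by omega,
        show 2*(j+2+a+1)-(j+2)-1 = j+2*a+3 from by omega,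
        show j+2-1 = j+1 from by omega]
      rw [show j+2+a-(j+1) = a+1 from by omega,
        show 2*(j+2+a)-(j+1)-1 = j+2*a+2 from by omega,
        show j+1-1 = j from by omega,
        show j+2+a-(j+2) = a from by omega,
        show 2*(j+2+a)-(j+2)-1 = j+2*a+1 from by omega]
      have := bessel_key j a
      push_cast at this ⊢
      linarith [this]
  · -- k = n+1
    subst heq
    rcases Nat.eq_zero_or_pos n with rfl | hn
    · simp [besselFirst]
    · have hbtop : besselFirst n (n+1) = 0 := by simp [besselFirst]
      rw [bessel_of_le (n+1) (n+1) (by omega) le_rfl, if_neg (by omega : ¬ n+1 = 0),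
        Nat.add_sub_cancel, bessel_of_le n n (by omega) le_rfl, hbtop,
        Nat.sub_self, Nat.sub_self]
      rw [show 2*(n+1)-(n+1)-1 = n from by omega, show 2*n-n-1 = n-1 from by omega]
      obtain ⟨m, rfl⟩ : ∃ m, n = m + 1 := ⟨n - 1, by omega⟩
      rw [show m+1-1 = m from by omega]
      have h3 : Nat.factorial (m+1) = (m+1) * Nat.factorial m := rfl
      rw [h3]
      have hm : (Nat.factorial m : ℚ) ≠ 0 := Nat.cast_ne_zero.mpr (Nat.factorial_ne_zero m)
      push_cast
      field_simp
      simp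
  · -- k > n+1
    have h1 : ¬ k ≤ n + 1 := by omega
    have h2 : ¬ k - 1 ≤ n := by omega
    have h3 : ¬ k ≤ n := by omega
    have h4 : ¬ k - 1 = 0 := by omega
    simp [besselFirst, h1, h2, h3, h4, hk.ne']

lemma bessel_top (n : ℕ) : besselFirst n (n+1) = 0 := by
  simp [besselFirst]

lemma rhs_eq (n : ℕ) (t : ℚ) :
    ∑ k ∈ Finset.range (n + 1), besselFirst n k * fallingFactorial t k
      = ∏ j ∈ Finset.range n, (t - 2*j) := by
  induction n with
  | zero => simp [besselFirst, fallingFactorial]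
  | succ n ih =>
    have step : ∀ k ∈ Finset.range (n + 2),
        besselFirst (n+1) k * fallingFactorial t k =
          (if k = 0 then 0 else besselFirst n (k-1)) * fallingFactorial t k
          + ((k:ℚ) - 2*n) * besselFirst n k * fallingFactorial t k := by
      intro k _
      rw [bessel_rec]; ring
    rw [Finset.sum_congr rfl step, Finset.sum_add_distrib]
    rw [Finset.sum_range_succ' (fun k => (if k = 0 then 0 else besselFirst n (k-1)) * fallingFactorial t k)]
    rw [Finset.sum_range_succ (fun k => ((k:ℚ) - 2*n) * besselFirst n k * fallingFactorial t k)]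
    simp only [if_neg (Nat.succ_ne_zero _), Nat.add_sub_cancel, eq_self_iff_true, if_true,
      bessel_top, mul_zero, zero_mul, add_zero, zero_add]
    rw [← Finset.sum_add_distrib]
    have key : ∀ k ∈ Finset.range (n+1),
        besselFirst n k * fallingFactorial t (k+1)
          + ((k:ℚ) - 2*n) * besselFirst n k * fallingFactorial t k
        = besselFirst n k * fallingFactorial t k * (t - 2*n) := by
      intro k _
      rw [ff_succ]; ring
    rw [Finset.sum_congr rfl key, ← Finset.sum_mul, ih, Finset.prod_range_succ]

theorem stmt3 (n : ℕ) (t : ℚ) :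
    ∑ k ∈ Finset.range (n + 1), 2 ^ (n - k) * (stirlingFirst n k : ℚ) * t ^ k =
      ∑ k ∈ Finset.range (n + 1), besselFirst n k * fallingFactorial t k := by
  rw [rhs_eq]
  have hcoeff : ∀ k, (stirlingFirst n k : ℚ) = (descPochhammer ℚ n).coeff k := by
    intro k
    rw [stirlingFirst, ← descPochhammer_map (Int.castRingHom ℚ) n, Polynomial.coeff_map]
    simp
  have hdeg : (descPochhammer ℚ n).natDegree < n + 1 := by
    rw [descPochhammer_natDegree]; omega
  have heval := Polynomial.eval_eq_sum_range' hdeg (t/2)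
  calc ∑ k ∈ Finset.range (n + 1), 2 ^ (n - k) * (stirlingFirst n k : ℚ) * t ^ k
      = ∑ k ∈ Finset.range (n + 1), 2 ^ n * ((descPochhammer ℚ n).coeff k * (t/2) ^ k) := by
        refine Finset.sum_congr rfl fun k hk => ?_
        rw [hcoeff]
        have hkn : k ≤ n := by simpa [Nat.lt_succ_iff] using hk
        have h2 : (2:ℚ) ^ (n - k) * 2 ^ k = 2 ^ n := by
          rw [← pow_add]; congr 1; omega
        have h2k : (2:ℚ) ^ k ≠ 0 := pow_ne_zero _ two_ne_zero
        rw [← h2, div_pow, mul_div_assoc', mul_assoc ((2:ℚ) ^ (n - k)) ((2:ℚ) ^ k),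
          mul_div_assoc', mul_div_cancel_left₀ _ h2k]
        ring
    _ = 2 ^ n * (descPochhammer ℚ n).eval (t/2) := by
        rw [← Finset.mul_sum, ← heval]
    _ = ∏ j ∈ Finset.range n, (t - 2*j) := by
        rw [desc_eval, show (2:ℚ)^n = ∏ _j ∈ Finset.range n, (2:ℚ) from by simp,
          ← Finset.prod_mul_distrib]
        exact Finset.prod_congr rfl fun j _ => by ring
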